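/- arXiv:1610.07397 — 3 statements merged into one kernel-verified Lean document; each statement's English description precedes it below -/
import Mathlib

section
/- Let G be a finite group, W an abelian normal subgroup of G with quotient H = G/W, and suppose there is a normal subgroup K of H such that gcd(|K|, |W|) = 1 and such that no non-identity element of W is fixed by the conjugation action of K on W. Then the extension splits: G is isomorphic to the semidirect product W ⋊ H. -/
open Subgroup MulAction Pointwise

lemma conj_of_isComplement' {L : Type*} [Group L] [Finite L] (W C C' : Subgroup L)
    [W.Normal] [IsMulCommutative W]
    (hcop : Nat.Coprime (Nat.card W) W.index)
    (h : IsComplement' W C) (h' : IsComplement' W C') :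
    ∃ w : W, C.map (MulAut.conj (w : L)).toMonoidHom = C' := by
  have cardW : 0 < Nat.card W := Nat.card_pos
  let mkQ : W.LeftTransversal → W.QuotientDiff := fun S => Quotient.mk'' S
  -- complements are left transversals
  have hT : IsComplement (C : Set L) (W : Set L) := h.symm
  have hT' : IsComplement (C' : Set L) (W : Set L) := h'.symm
  set α : W.QuotientDiff := mkQ ⟨(C : Set L), hT⟩ with hα
  set β : W.QuotientDiff := mkQ ⟨(C' : Set L), hT'⟩ with hβ
  -- each complement equals the stabilizer of its class
  have key : ∀ (D : Subgroup L) (hD : IsComplement' W D)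
      (hDT : IsComplement (D : Set L) (W : Set L)),
      stabilizer L (mkQ ⟨(D : Set L), hDT⟩) = D := by
    intro D hD hDT
    have hstab := Subgroup.isComplement'_stabilizer_of_coprime
      (α := mkQ ⟨(D : Set L), hDT⟩) hcop
    have hle : D ≤ stabilizer L (mkQ ⟨(D : Set L), hDT⟩) := by
      intro d hd
      show d • mkQ ⟨(D : Set L), hDT⟩ = _
      show Quotient.map' _ _ _ = _
      rw [Quotient.map'_mk'']
      refine congrArg _ (Subtype.ext ?_)
      show MulOpposite.op d⁻¹ • (D : Set L) = (D : Set L)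
      ext y
      constructor
      · rintro ⟨z, hz, rfl⟩
        simpa using D.mul_mem hz (D.inv_mem hd)
      · intro hy
        exact ⟨y * d, D.mul_mem hy hd, by simp⟩
    have hcard : Nat.card (stabilizer L (mkQ ⟨(D : Set L), hDT⟩))
        ≤ Nat.card D := by
      have h1 := hD.card_mul
      have h2 := hstab.card_mul
      exact le_of_eq (Nat.eq_of_mul_eq_mul_left cardW (h2.trans h1.symm))
    exact (Subgroup.eq_of_le_of_card_ge hle hcard).symm
  obtain ⟨w, hw⟩ := Subgroup.exists_smul_eq hcop α β
  refine ⟨w, ?_⟩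
  have h1 : stabilizer L β = (stabilizer L α).map (MulAut.conj (w : L)).toMonoidHom := by
    rw [← hw]
    exact stabilizer_smul_eq_stabilizer_map_conj (w : L) α
  rw [key C h hT] at h1
  rw [key C' h' hT'] at h1
  exact h1.symm

/-- let `G` be a finite group, `W` an abelian normal subgroup with quotient
`H = G/W`, and `K ⊴ H` with `gcd(|K|, |W|) = 1` such that no non-identity element of `W`
is fixed by the conjugation action of `K`. Then the extension splits, i.e. `G ≅ W ⋊ H`:
there is a homomorphism `s : H → G` which is a section of the natural projection. -/
theorem stmt3 (G : Type) [Group G] [Finite G] (W : Subgroup G) [W.Normal]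
    (hWab : ∀ x y : W, x * y = y * x)
    (K : Subgroup (G ⧸ W)) [K.Normal]
    (hcop : Nat.Coprime (Nat.card K) (Nat.card W))
    (hfix : ∀ w : G, w ∈ W → (∀ g : G, (g : G ⧸ W) ∈ K → g * w * g⁻¹ = w) → w = 1) :
    ∃ s : (G ⧸ W) →* G, ∀ x : G ⧸ W, (s x : G ⧸ W) = x := by
  haveI : IsMulCommutative W := ⟨⟨hWab⟩⟩
  have hW' : ∀ a b : G, a ∈ W → b ∈ W → a * b = b * a := fun a b ha hb =>
    Subtype.ext_iff.mp (hWab ⟨a, ha⟩ ⟨b, hb⟩)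
  set L : Subgroup G := K.comap (QuotientGroup.mk' W) with hLdef
  haveI hLn : L.Normal := Subgroup.Normal.comap inferInstance (QuotientGroup.mk' W)
  have hWL : W ≤ L := by
    intro w hw
    have : QuotientGroup.mk' W w = 1 := (QuotientGroup.eq_one_iff w).mpr hw
    simp only [hLdef, Subgroup.mem_comap, this]
    exact K.one_mem
  set W₀ : Subgroup L := W.subgroupOf L with hW₀def
  haveI : W₀.Normal := Subgroup.Normal.subgroupOf inferInstance L
  haveI : IsMulCommutative W₀ := inferInstance
  have cardW₀ : Nat.card W₀ = Nat.card W :=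
    Nat.card_congr (Subgroup.subgroupOfEquivOfLe hWL).toEquiv
  have indexW₀ : W₀.index = Nat.card K := by
    let φ : L →* K := ((QuotientGroup.mk' W).domRestrict L).codRestrict K (fun x => x.2)
    have hker : φ.ker = W₀ := by
      ext x
      simp only [φ, MonoidHom.mem_ker, MonoidHom.codRestrict_apply, MonoidHom.domRestrict_apply]
      rw [Subtype.ext_iff]
      show (QuotientGroup.mk' W (x : G) : G ⧸ W) = 1 ↔ x ∈ W₀
      rw [QuotientGroup.mk'_apply, QuotientGroup.eq_one_iff]
      exact (Subgroup.mem_subgroupOf).symm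
    have hrange : φ.range = ⊤ := by
      rw [Subgroup.eq_top_iff']
      intro k
      obtain ⟨g, hg⟩ := QuotientGroup.mk'_surjective W (k : G ⧸ W)
      have hgL : g ∈ L := by
        simp only [hLdef, Subgroup.mem_comap, hg]
        exact k.2
      exact ⟨⟨g, hgL⟩, Subtype.ext hg⟩
    rw [← hker, Subgroup.index_ker, hrange, Subgroup.card_top]
  have hcop₀ : Nat.Coprime (Nat.card W₀) W₀.index := by
    rw [cardW₀, indexW₀]; exact hcop.symm
  obtain ⟨C₀, hC₀⟩ := Subgroup.exists_right_complement'_of_coprime hcop₀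
  set C : Subgroup G := C₀.map L.subtype with hCdef
  have hCL : C ≤ L := by
    rintro x ⟨c, hc, rfl⟩
    exact c.2
  have cardC : Nat.card C = Nat.card C₀ :=
    (Nat.card_congr (Subgroup.equivMapOfInjective C₀ L.subtype L.subtype_injective).toEquiv).symm
  have hdecomp : ∀ g : G, g ∈ L → ∃ w ∈ W, ∃ c ∈ C, g = w * c := by
    intro g hg
    obtain ⟨⟨w, c⟩, hwc⟩ := hC₀.2 ⟨g, hg⟩
    refine ⟨((w : L) : G), Subgroup.mem_subgroupOf.mp w.2, ((c : L) : G),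
      ⟨(c : L), c.2, rfl⟩, ?_⟩
    have := congrArg (fun x : L => (x : G)) hwc
    exact this.symm
  have hWC : ∀ x : G, x ∈ W → x ∈ C → x = 1 := by
    rintro x hxW ⟨c, hc, rfl⟩
    have h1 : c ∈ W₀ := Subgroup.mem_subgroupOf.mpr hxW
    have h2 : c ∈ W₀ ⊓ C₀ := ⟨h1, hc⟩
    rw [hC₀.disjoint.eq_bot] at h2
    rw [Subgroup.mem_bot] at h2
    rw [h2]; rfl
  -- Frattini argument
  have hfrattini : ∀ g : G, ∃ w ∈ W, w * g ∈ Subgroup.normalizer (C : Set G) := by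
    intro g
    set D : Subgroup G := C.map (MulAut.conj g).toMonoidHom with hDdef
    have hDL : D ≤ L := by
      rintro x ⟨c, hc, rfl⟩
      exact hLn.conj_mem c (hCL hc) g
    set D₀ : Subgroup L := D.subgroupOf L with hD₀def
    have cardD₀ : Nat.card D₀ = Nat.card C₀ := by
      rw [Nat.card_congr (Subgroup.subgroupOfEquivOfLe hDL).toEquiv, hDdef,
        ← Nat.card_congr (Subgroup.equivMapOfInjective C (MulAut.conj g).toMonoidHom
          (MulAut.conj g).injective).toEquiv, cardC]
    have hD₀comp : IsComplement' W₀ D₀ := by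
      refine Subgroup.isComplement'_of_coprime ?_ ?_
      · rw [cardD₀]; exact hC₀.card_mul
      · rw [cardD₀, ← hC₀.symm.index_eq_card]; exact hcop₀
    obtain ⟨w, hw⟩ := conj_of_isComplement' W₀ D₀ C₀ hcop₀ hD₀comp hC₀
    set w' : G := ((w : L) : G) with hw'def
    have hw'W : w' ∈ W := Subgroup.mem_subgroupOf.mp w.2
    refine ⟨w', hw'W, ?_⟩
    -- from hw : D₀.map (conj (w:L)) = C₀, deduce C.map (conj (w' * g)) = C
    have hmap1 : (D₀.map (MulAut.conj (w : L)).toMonoidHom).map L.subtype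
        = (D₀.map L.subtype).map (MulAut.conj w').toMonoidHom := by
      rw [Subgroup.map_map, Subgroup.map_map]
      rfl
    have hmap2 : D₀.map L.subtype = D := by
      rw [hD₀def, Subgroup.subgroupOf_map_subtype, inf_eq_left.mpr hDL]
    have hCeq : C.map (MulAut.conj (w' * g)).toMonoidHom = C := by
      have hcomp : (MulAut.conj (w' * g)).toMonoidHom
          = ((MulAut.conj w').toMonoidHom).comp ((MulAut.conj g).toMonoidHom) := by
        ext x
        simp [mul_assoc]
      rw [hcomp, ← Subgroup.map_map, ← hDdef, ← hmap2, ← hmap1, hw]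
    rw [Subgroup.mem_normalizer_iff]
    intro h
    constructor
    · intro hh
      rw [← hCeq]
      exact ⟨h, hh, rfl⟩
    · intro hh
      rw [← hCeq, Subgroup.mem_map_equiv, MulAut.conj_symm_apply] at hh
      have hE : (w' * g)⁻¹ * (w' * g * h * (w' * g)⁻¹) * (w' * g) = h := by group
      rwa [hE] at hh
  set N : Subgroup G := Subgroup.normalizer (C : Set G) with hNdef
  have hdisj : ∀ x : G, x ∈ W → x ∈ N → x = 1 := by
    intro x hxW hxN
    apply hfix x hxW
    intro g hgK
    have hgL : g ∈ L := by simpa [hLdef, Subgroup.mem_comap] using hgK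
    obtain ⟨wg, hwg, c, hc, rfl⟩ := hdecomp g hgL
    have hxc : c * x * c⁻¹ = x := by
      have h1 : x * c * x⁻¹ ∈ C := (Subgroup.mem_normalizer_iff.mp hxN c).mp hc
      have h2 : x * c * x⁻¹ * c⁻¹ ∈ C := C.mul_mem h1 (C.inv_mem hc)
      have h3 : x * c * x⁻¹ * c⁻¹ ∈ W := by
        have hconj : c * x⁻¹ * c⁻¹ ∈ W :=
          Subgroup.Normal.conj_mem ‹W.Normal› _ (W.inv_mem hxW) c
        have := W.mul_mem hxW hconj
        convert this using 1
        group
      have h4 := hWC _ h3 h2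
      have h5 : x * c * x⁻¹ = c := by
        have := congrArg (· * c) h4
        simpa [mul_assoc] using this
      calc c * x * c⁻¹ = (x * (x⁻¹ * c * x) * x⁻¹ * c⁻¹) * c * x * c⁻¹ := by group
        _ = x := by
          have h6 : x⁻¹ * c * x = c := by
            have := congrArg (fun y => x⁻¹ * y * x) h5
            simpa [mul_assoc] using this.symm
          rw [h6]; group
    calc wg * c * x * (wg * c)⁻¹ = wg * (c * x * c⁻¹) * wg⁻¹ := by group
      _ = wg * x * wg⁻¹ := by rw [hxc]
      _ = x := by rw [hW' wg x hwg hxW]; group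
  -- build the section
  let f : N →* G ⧸ W := (QuotientGroup.mk' W).comp N.subtype
  have hinj : Function.Injective f := by
    rw [injective_iff_map_eq_one]
    intro n hn
    have : (n : G) ∈ W := (QuotientGroup.eq_one_iff _).mp hn
    exact Subtype.ext (hdisj _ this n.2)
  have hsurj : Function.Surjective f := by
    intro x
    obtain ⟨g, hg⟩ := QuotientGroup.mk'_surjective W x
    obtain ⟨w, hwW, hwN⟩ := hfrattini g
    refine ⟨⟨w * g, hwN⟩, ?_⟩
    show QuotientGroup.mk' W (w * g) = x
    have hw1 : QuotientGroup.mk' W w = 1 := (QuotientGroup.eq_one_iff w).mpr hwW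
    rw [map_mul, hw1, one_mul, hg]
  let e := MulEquiv.ofBijective f ⟨hinj, hsurj⟩
  refine ⟨N.subtype.comp e.symm.toMonoidHom, ?_⟩
  intro x
  exact e.apply_symm_apply x
end

section
/- Let G be a finite group, W an abelian normal subgroup of G with quotient H, and K a normal subgroup of H such that gcd(|K|, |W|) = 1 and W^K = 1 (no non-identity element of W is fixed by K). Then the second group cohomology H^2(H, W) with coefficients in the H-module W vanishes. -/
open scoped IsMulCommutative

open groupCohomology Finset

/-- let `G` be a finite group, `W` an abelian normal subgroup with quotient
`H = G/W`, on which `H` acts by conjugation (encoded by a representation `ρ` of `H` on the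
abelian group `W`, written additively, which agrees with conjugation), and `K ⊴ H` with
`gcd(|K|, |W|) = 1` such that no non-identity element of `W` is fixed by `K`. Then the
second group cohomology `H²(H, W)` vanishes. -/
theorem stmt4 (G : Type) [Group G] [Finite G] (W : Subgroup G) [hN : W.Normal]
    [IsMulCommutative W]
    (K : Subgroup (G ⧸ W)) [K.Normal]
    (hcop : Nat.Coprime (Nat.card K) (Nat.card W))
    (hfix : ∀ w : G, w ∈ W → (∀ g : G, (g : G ⧸ W) ∈ K → g * w * g⁻¹ = w) → w = 1)
    (ρ : Representation ℤ (G ⧸ W) (Additive W))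
    (hρ : ∀ (g : G) (w : W),
      ρ ((g : G) : G ⧸ W) (Additive.ofMul w) =
        Additive.ofMul (⟨g * (w : G) * g⁻¹, hN.conj_mem (w : G) w.2 g⟩ : W)) :
    Subsingleton (groupCohomology (Rep.of ρ) 2) := by
  classical
  haveI : Fintype ↥K := Fintype.ofFinite _
  set m : ℕ := Fintype.card ↥K with hm
  have hm' : (Nat.card ↥W).Coprime m := by
    rw [hm, ← Nat.card_eq_fintype_card]; exact hcop.symm
  set e : ↥W ≃ ↥W := powCoprime hm' with he
  -- multiplication by m on Additive W is injective and surjective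
  have hmu : ∀ a : Additive ↥W, m • Additive.ofMul (e.symm (Additive.toMul a)) = a := by
    intro a
    rw [← ofMul_pow]
    have h1 : (e.symm (Additive.toMul a)) ^ m = e (e.symm (Additive.toMul a)) := rfl
    rw [h1, e.apply_symm_apply, ofMul_toMul]
  have hinj : ∀ a b : Additive ↥W, m • a = m • b → a = b := by
    intro a b hab
    have h1 : e (Additive.toMul a) = e (Additive.toMul b) := by
      show Additive.toMul a ^ m = Additive.toMul b ^ m
      have h2 := congrArg Additive.toMul hab
      rwa [toMul_nsmul, toMul_nsmul] at h2
    exact Additive.toMul.injective (e.injective h1)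
  -- any K-invariant element of Additive W is zero
  have key : ∀ b : Additive ↥W,
      (∀ g : G, (g : G ⧸ W) ∈ K → ρ ((g : G) : G ⧸ W) b = b) → b = 0 := by
    intro b hb
    have h2 : ∀ g : G, (g : G ⧸ W) ∈ K →
        g * ↑(Additive.toMul b) * g⁻¹ = ↑(Additive.toMul b) := by
      intro g hg
      have h3 := hρ g (Additive.toMul b)
      rw [ofMul_toMul, hb g hg] at h3
      have h4 := congrArg (fun w : Additive ↥W => ((Additive.toMul w : ↥W) : G)) h3
      simpa using h4.symm
    have h5 := hfix ↑(Additive.toMul b) (Additive.toMul b).2 h2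
    have h6 : Additive.toMul b = (1 : ↥W) := Subtype.ext h5
    have h7 : b = Additive.ofMul (1 : ↥W) := by
      rw [← h6, ofMul_toMul]
    rw [h7, ofMul_one]
  -- the norm of K vanishes on Additive W
  have Nzero : ∀ a : Additive ↥W, (∑ k : ↥K, ρ (↑k) a) = 0 := by
    intro a
    apply key
    intro g hg
    rw [map_sum]
    refine Fintype.sum_equiv (Equiv.mulLeft (⟨(g : G ⧸ W), hg⟩ : ↥K)) _ _ fun k => ?_
    show ρ ((g : G ⧸ W)) (ρ (↑k) a) = ρ ((g : G ⧸ W) * ↑k) a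
    rw [map_mul]; rfl
  -- conjugation reindexing of sums over K
  have sum_conj : ∀ (x : G ⧸ W) (Φ : G ⧸ W → Additive ↥W),
      (∑ k : ↥K, Φ (x * ↑k)) = ∑ k : ↥K, Φ (↑k * x) := by
    intro x Φ
    refine Fintype.sum_equiv (MulAut.conjNormal x).toEquiv _ _ fun k => ?_
    show Φ (x * ↑k) = Φ (↑(MulAut.conjNormal x k) * x)
    rw [MulAut.conjNormal_apply, inv_mul_cancel_right]
  -- reduce to showing every 2-cocycle is a coboundary
  suffices hs : ∀ x : groupCohomology (Rep.of ρ) 2, x = 0 by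
    exact ⟨fun a b => (hs a).trans (hs b).symm⟩
  intro x
  induction x using groupCohomology.H2_induction_on with | h x => ?_
  rw [groupCohomology.H2π_eq_zero_iff]
  obtain ⟨F, hF⟩ := x
  show F ∈ groupCohomology.coboundaries₂ (Rep.of ρ)
  suffices hcob : ∃ u : G ⧸ W → Additive ↥W, ∀ g h : G ⧸ W,
      ρ g (u h) - u (g * h) + u g = F (g, h) by
    obtain ⟨u, hu⟩ := hcob
    exact ⟨u, funext fun p => by simpa [groupCohomology.d₁₂_hom_apply] using hu p.1 p.2⟩
  let F' : (G ⧸ W) × (G ⧸ W) → Additive ↥W := F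
  have hc : ∀ x y z : G ⧸ W,
      ρ x (F' (y, z)) - F' (x * y, z) + F' (x, y * z) - F' (x, y) = 0 := by
    intro x y z
    exact (groupCohomology.mem_cocycles₂_def F).1 hF x y z
  set P : G ⧸ W → Additive ↥W := fun x => ∑ k : ↥K, F' (↑k, x) with hP
  set R : G ⧸ W → Additive ↥W := fun x => ∑ k : ↥K, F' (x, ↑k) with hR
  -- (I)
  have hI : ∀ y z : G ⧸ W, (∑ k : ↥K, F' (↑k * y, z)) = P (y * z) - P y := by
    intro y z
    have hk : ∀ k : ↥K, F' (↑k * y, z)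
        = ρ (↑k) (F' (y, z)) + F' (↑k, y * z) - F' (↑k, y) := by
      intro k
      have h := hc ↑k y z
      have h2 : F' (↑k * y, z) - (ρ (↑k) (F' (y, z)) + F' (↑k, y * z) - F' (↑k, y))
          = -(ρ (↑k) (F' (y, z)) - F' (↑k * y, z) + F' (↑k, y * z) - F' (↑k, y)) := by abel
      rw [h, neg_zero] at h2
      exact sub_eq_zero.1 h2
    calc (∑ k : ↥K, F' (↑k * y, z))
        = ∑ k : ↥K, (ρ (↑k) (F' (y, z)) + F' (↑k, y * z) - F' (↑k, y)) :=
          Finset.sum_congr rfl fun k _ => hk k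
      _ = ((∑ k : ↥K, ρ (↑k) (F' (y, z))) + P (y * z)) - P y := by
          rw [Finset.sum_sub_distrib, Finset.sum_add_distrib]
      _ = P (y * z) - P y := by rw [Nzero, zero_add]
  -- (II)
  have hII : ∀ x y : G ⧸ W, (∑ k : ↥K, F' (x, ↑k * y))
      = P (x * y) - P x + R x - ρ x (P y) := by
    intro x y
    have hk : ∀ k : ↥K, F' (x, ↑k * y)
        = F' (x * ↑k, y) + F' (x, ↑k) - ρ x (F' (↑k, y)) := by
      intro k
      have h := hc x ↑k y
      have h2 : F' (x, ↑k * y) - (F' (x * ↑k, y) + F' (x, ↑k) - ρ x (F' (↑k, y)))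
          = ρ x (F' (↑k, y)) - F' (x * ↑k, y) + F' (x, ↑k * y) - F' (x, ↑k) := by abel
      rw [h] at h2
      exact sub_eq_zero.1 h2
    calc (∑ k : ↥K, F' (x, ↑k * y))
        = ∑ k : ↥K, (F' (x * ↑k, y) + F' (x, ↑k) - ρ x (F' (↑k, y))) :=
          Finset.sum_congr rfl fun k _ => hk k
      _ = ((∑ k : ↥K, F' (x * ↑k, y)) + R x) - ∑ k : ↥K, ρ x (F' (↑k, y)) := by
          rw [Finset.sum_sub_distrib, Finset.sum_add_distrib]
      _ = ((∑ k : ↥K, F' (↑k * x, y)) + R x) - ρ x (P y) := by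
          rw [sum_conj x (fun z => F' (z, y)), hP, map_sum]
      _ = P (x * y) - P x + R x - ρ x (P y) := by rw [hI x y]
  -- (III): the main identity
  have main : ∀ x y : G ⧸ W, m • F' (x, y)
      = ρ x (R y - P y) - (R (x * y) - P (x * y)) + (R x - P x) := by
    intro x y
    have hk : ∀ k : ↥K, F' (x, y)
        = ρ x (F' (y, ↑k)) - F' (x * y, ↑k) + F' (x, y * ↑k) := by
      intro k
      have h := hc x y ↑k
      have h2 : F' (x, y) - (ρ x (F' (y, ↑k)) - F' (x * y, ↑k) + F' (x, y * ↑k))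
          = -(ρ x (F' (y, ↑k)) - F' (x * y, ↑k) + F' (x, y * ↑k) - F' (x, y)) := by abel
      rw [h, neg_zero] at h2
      exact sub_eq_zero.1 h2
    have h3 : m • F' (x, y)
        = ρ x (R y) - R (x * y) + ∑ k : ↥K, F' (x, y * ↑k) := by
      calc m • F' (x, y) = ∑ _k : ↥K, F' (x, y) := by
            rw [Finset.sum_const, Finset.card_univ]
        _ = ∑ k : ↥K, (ρ x (F' (y, ↑k)) - F' (x * y, ↑k) + F' (x, y * ↑k)) :=
            Finset.sum_congr rfl fun k _ => hk k
        _ = ((∑ k : ↥K, ρ x (F' (y, ↑k))) - ∑ k : ↥K, F' (x * y, ↑k))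
              + ∑ k : ↥K, F' (x, y * ↑k) := by
            rw [Finset.sum_add_distrib, Finset.sum_sub_distrib]
        _ = ρ x (R y) - R (x * y) + ∑ k : ↥K, F' (x, y * ↑k) := by
            rw [hR, map_sum]
    have h4 : (∑ k : ↥K, F' (x, y * ↑k)) = P (x * y) - P x + R x - ρ x (P y) := by
      rw [sum_conj y (fun z => F' (x, z))]
      exact hII x y
    rw [h3, h4, map_sub]
    abel
  -- assemble the coboundary
  refine ⟨fun x => Additive.ofMul (e.symm (Additive.toMul (R x - P x))), fun g h => ?_⟩
  apply hinj
  show m • (ρ g (Additive.ofMul (e.symm (Additive.toMul (R h - P h))))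
      - Additive.ofMul (e.symm (Additive.toMul (R (g * h) - P (g * h))))
      + Additive.ofMul (e.symm (Additive.toMul (R g - P g)))) = m • F' (g, h)
  rw [smul_add, smul_sub, ← map_nsmul (ρ g), hmu, hmu, hmu, main g h]
end

section
/- Let p be a prime and P a finite p-group. The kernel of the map b(P) → G_0(F_p[P]), [X] ↦ [F_p[X]], is precisely the set of elements Σ n_i [X_i] (virtual G-sets) whose total 'virtual cardinality' Σ n_i |X_i| is zero; i.e. the kernel equals the kernel of the augmentation b(P) → Z sending [X] to |X|. -/
/-- Relations for the Grothendieck group `G₀(R)`: see `G0`. -/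
def G0Rels (R : Type) [Ring R] : AddSubgroup (FreeAbelianGroup (ModuleCat.{0} R)) :=
  AddSubgroup.closure
    { x | ∃ (A C B : ModuleCat.{0} R), Module.Finite R A ∧ Module.Finite R C ∧
        Module.Finite R B ∧
        ∃ (f : A →ₗ[R] C) (g : C →ₗ[R] B),
          Function.Injective f ∧ Function.Surjective g ∧
          LinearMap.range f = LinearMap.ker g ∧
          x = FreeAbelianGroup.of A - FreeAbelianGroup.of C + FreeAbelianGroup.of B }

/-- The Grothendieck group `G₀(R)` of finitely generated `R`-modules. -/
def G0 (R : Type) [Ring R] : Type 1 :=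
  FreeAbelianGroup (ModuleCat.{0} R) ⧸ G0Rels R

instance (R : Type) [Ring R] : AddCommGroup (G0 R) :=
  QuotientAddGroup.Quotient.addCommGroup _

/-- The class of a module in the Grothendieck group. -/
def G0.cls {R : Type} [Ring R] (M : ModuleCat.{0} R) : G0 R :=
  QuotientAddGroup.mk (FreeAbelianGroup.of M)

/-- A bundled finite `G`-set. -/
structure BSet (G : Type) [Group G] : Type 1 where
  carrier : Type
  [ft : Finite carrier]
  [ma : MulAction G carrier]

attribute [instance] BSet.ft BSet.ma

/-- The relations defining the Burnside ring `b(G)` as a quotient of the free abelian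
group on (bundled) finite `G`-sets: `[X] + [Y] - [X ⊔ Y]`, together with `[X] - [Y]`
whenever `X ≅ Y` as `G`-sets (so that `b(G)` is the free abelian group on isomorphism
classes of finite `G`-sets modulo the disjoint union relations). -/
def burnsideRels (G : Type) [Group G] : AddSubgroup (FreeAbelianGroup (BSet G)) :=
  AddSubgroup.closure
    ({ x | ∃ A B : BSet G,
        x = FreeAbelianGroup.of A + FreeAbelianGroup.of B -
          FreeAbelianGroup.of ⟨A.carrier ⊕ B.carrier⟩ } ∪
     { x | ∃ A B : BSet G, (∃ e : A.carrier ≃ B.carrier, ∀ (g : G) a, e (g • a) = g • e a) ∧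
        x = FreeAbelianGroup.of A - FreeAbelianGroup.of B })

/-- The map on the free abelian group on finite `G`-sets sending a `G`-set `X` to the
class of the permutation module `𝔽_p[X]` in `G₀(𝔽_p[G])`.  It descends to the map
`m_{𝔽_p,ss}(G) : b(G) → G₀(𝔽_p[G])` since it kills `burnsideRels G`. -/
noncomputable def permClass (p : ℕ) [Fact p.Prime] (G : Type) [Group G] :
    FreeAbelianGroup (BSet G) →+ G0 (MonoidAlgebra (ZMod p) G) :=
  FreeAbelianGroup.lift fun A =>
    G0.cls (ModuleCat.of (MonoidAlgebra (ZMod p) G)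
      (Representation.ofMulAction (ZMod p) G A.carrier).asModule)


/-- The augmentation map `b(G) → ℤ` sending a finite `G`-set to its cardinality,
considered on the free abelian group on finite `G`-sets. -/
noncomputable def aug (G : Type) [Group G] : FreeAbelianGroup (BSet G) →+ ℤ :=
  FreeAbelianGroup.lift fun A => (Nat.card A.carrier : ℤ)

section helpers
variable {R : Type} [Ring R]

theorem g0rel (A C B : Type) [AddCommGroup A] [Module R A] [AddCommGroup C] [Module R C]
    [AddCommGroup B] [Module R B] [Module.Finite R A] [Module.Finite R C] [Module.Finite R B]
    (f : A →ₗ[R] C) (g : C →ₗ[R] B) (hf : Function.Injective f) (hg : Function.Surjective g)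
    (hr : LinearMap.range f = LinearMap.ker g) :
    G0.cls (ModuleCat.of R A) - G0.cls (ModuleCat.of R C) + G0.cls (ModuleCat.of R B) = 0 := by
  have hx : (FreeAbelianGroup.of (ModuleCat.of R A) - FreeAbelianGroup.of (ModuleCat.of R C) +
      FreeAbelianGroup.of (ModuleCat.of R B)) ∈ G0Rels R := by
    apply AddSubgroup.subset_closure
    exact ⟨ModuleCat.of R A, ModuleCat.of R C, ModuleCat.of R B, ‹_›, ‹_›, ‹_›, f, g, hf, hg, hr, rfl⟩
  exact (QuotientAddGroup.eq_zero_iff _).2 hx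

theorem cls_punit : G0.cls (ModuleCat.of R PUnit) = 0 := by
  have h := g0rel (R := R) PUnit PUnit PUnit LinearMap.id 0 (fun a b _ => Subsingleton.elim a b)
    (fun x => ⟨0, Subsingleton.elim _ _⟩)
    (by rw [LinearMap.ker_zero, LinearMap.range_id])
  rwa [sub_self, zero_add] at h

theorem cls_congr {M N : Type} [AddCommGroup M] [Module R M] [AddCommGroup N] [Module R N]
    [Module.Finite R M] (e : M ≃ₗ[R] N) :
    G0.cls (ModuleCat.of R M) = G0.cls (ModuleCat.of R N) := by
  haveI : Module.Finite R N := Module.Finite.equiv e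
  have h := g0rel (R := R) M N PUnit e.toLinearMap 0 e.injective
    (fun x => ⟨0, Subsingleton.elim _ _⟩)
    (by rw [LinearMap.ker_zero, LinearEquiv.range])
  rw [cls_punit, add_zero, sub_eq_zero] at h
  exact h

end helpers
section card
variable {R : Type} [Ring R]

theorem cardRel {A C B : Type} [AddCommGroup A] [Module R A] [AddCommGroup C] [Module R C]
    [AddCommGroup B] [Module R B] [Finite C]
    (f : A →ₗ[R] C) (g : C →ₗ[R] B) (hf : Function.Injective f) (hg : Function.Surjective g)
    (hr : LinearMap.range f = LinearMap.ker g) :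
    Nat.card A * Nat.card B = Nat.card C := by
  classical
  let K : AddSubgroup C := g.toAddMonoidHom.ker
  have hKker : ∀ x, x ∈ K ↔ x ∈ LinearMap.ker g := by
    intro x; exact Iff.rfl
  have hB : Nat.card (C ⧸ K) = Nat.card B :=
    Nat.card_congr (QuotientAddGroup.quotientKerEquivOfSurjective g.toAddMonoidHom hg).toEquiv
  have hA : Nat.card A = Nat.card K := by
    refine Nat.card_congr ?_
    have hset : Set.range f = (K : Set C) := by
      ext x
      constructor
      · rintro ⟨a, rfl⟩
        have h2 : f a ∈ LinearMap.range f := ⟨a, rfl⟩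
        rw [hr] at h2
        exact (hKker _).2 h2
      · intro hx
        have h2 : x ∈ LinearMap.range f := by rw [hr]; exact (hKker x).1 hx
        exact h2
    exact (Equiv.ofInjective f hf).trans (Equiv.setCongr hset)
  rw [hA, ← hB, mul_comm]
  exact (AddSubgroup.card_eq_card_quotient_mul_card_addSubgroup K).symm

end card
section dim
open scoped Classical in
noncomputable def uOf {R : Type} [Ring R] (M : ModuleCat.{0} R) : ℚˣ :=
  if h : Finite M then
    haveI := h
    haveI : Nonempty M := ⟨0⟩
    Units.mk0 (Nat.card M : ℚ) (by exact_mod_cast Nat.card_pos.ne')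
  else 1

theorem uOf_eq {R : Type} [Ring R] (M : ModuleCat.{0} R) (h : Finite M) :
    (uOf M : ℚ) = (Nat.card M : ℚ) := by
  classical
  rw [uOf]
  rw [dif_pos h]
  rfl

noncomputable def dimFree (R : Type) [Ring R] : FreeAbelianGroup (ModuleCat.{0} R) →+ Additive ℚˣ :=
  FreeAbelianGroup.lift fun M => Additive.ofMul (uOf M)

theorem dimFree_kills {R : Type} [Ring R]
    (hfin : ∀ (M : ModuleCat.{0} R), Module.Finite R M → Finite M) :
    G0Rels R ≤ (dimFree R).ker := by
  rw [G0Rels, AddSubgroup.closure_le]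
  rintro x ⟨A, C, B, hA, hC, hB, f, g, hf, hg, hr, rfl⟩
  have hu : uOf A * uOf B = uOf C := by
    haveI := hfin A hA
    haveI := hfin B hB
    haveI := hfin C hC
    ext
    push_cast [Units.val_mul, uOf_eq A ‹_›, uOf_eq B ‹_›, uOf_eq C ‹_›]
    exact_mod_cast cardRel f g hf hg hr
  show dimFree R _ = 0
  rw [map_add, map_sub]
  simp only [dimFree, FreeAbelianGroup.lift_apply_of]
  rw [sub_add_eq_add_sub, ← ofMul_mul, hu, sub_eq_zero]

noncomputable def dimMap (R : Type) [Ring R]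
    (hfin : ∀ (M : ModuleCat.{0} R), Module.Finite R M → Finite M) : G0 R →+ Additive ℚˣ :=
  QuotientAddGroup.lift (G0Rels R) (dimFree R) (dimFree_kills hfin)

theorem dimMap_cls {R : Type} [Ring R] (hfin) (M : ModuleCat.{0} R) :
    dimMap R hfin (G0.cls M) = Additive.ofMul (uOf M) := by
  show dimFree R (FreeAbelianGroup.of M) = _
  exact FreeAbelianGroup.lift_apply_of ..
end dim
section triv
variable (p : ℕ) [Fact p.Prime] (P : Type) [Group P]

noncomputable def eps : MonoidAlgebra (ZMod p) P →+* ZMod p :=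
  (MonoidAlgebra.lift (ZMod p) (ZMod p) P 1).toRingHom

theorem eps_single (g : P) (c : ZMod p) :
    eps p P (MonoidAlgebra.single g c) = c := by
  simp [eps, MonoidAlgebra.lift_single]

def TrivM : Type := ZMod p

instance : AddCommGroup (TrivM p) := inferInstanceAs (AddCommGroup (ZMod p))
noncomputable instance : Module (MonoidAlgebra (ZMod p) P) (TrivM p) :=
  Module.compHom (ZMod p) (eps p P)
instance : Finite (TrivM p) := inferInstanceAs (Finite (ZMod p))

omit [Fact (Nat.Prime p)] in
theorem card_trivM : Nat.card (TrivM p) = p := Nat.card_zmod p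

theorem smul_of_fixed {M : Type} [AddCommGroup M] [Module (MonoidAlgebra (ZMod p) P) M]
    {b : M} (hb : ∀ g : P, (MonoidAlgebra.single g (1 : ZMod p) : MonoidAlgebra (ZMod p) P) • b = b)
    (r : MonoidAlgebra (ZMod p) P) :
    r • b = (MonoidAlgebra.single (1 : P) (eps p P r) : MonoidAlgebra (ZMod p) P) • b := by
  induction r using MonoidAlgebra.induction_on with
  | of g =>
      rw [MonoidAlgebra.of_apply, hb g, eps_single, ← MonoidAlgebra.one_def, one_smul]
  | add f g hf hg =>
      rw [add_smul, hf, hg, map_add, ← add_smul, ← MonoidAlgebra.single_add]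
  | smul c f hf =>
      have halg : ∀ c : ZMod p, algebraMap (ZMod p) (MonoidAlgebra (ZMod p) P) c
          = MonoidAlgebra.single (1 : P) c := fun c => by
        rw [MonoidAlgebra.single_eq_algebraMap_mul_of]
        simp
      rw [Algebra.smul_def, mul_smul, hf, halg, ← mul_smul, MonoidAlgebra.single_mul_single,
        one_mul, map_mul, eps_single]
end triv
section key

/-- identity helper to view an element of `TrivM p` in `ZMod p`. -/
def tv {p : ℕ} (x : TrivM p) : ZMod p := x

variable {p : ℕ} [Fact p.Prime] {P : Type} [Group P] [Finite P] (hP : IsPGroup p P)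

include hP in
set_option linter.unusedSectionVars false in
theorem key_step (M : Type) [AddCommGroup M] [Module (MonoidAlgebra (ZMod p) P) M] [Finite M]
    (hM : 1 < Nat.card M) :
    ∃ (N : Submodule (MonoidAlgebra (ZMod p) P) M) (_ : TrivM p ≃ₗ[MonoidAlgebra (ZMod p) P] N),
      True := by
  classical
  -- action of P on M
  letI act : MulAction P M :=
    { smul := fun g m => (MonoidAlgebra.single g (1 : ZMod p) : MonoidAlgebra (ZMod p) P) • m
      one_smul := fun m => by
        show (MonoidAlgebra.single (1 : P) (1 : ZMod p) : MonoidAlgebra (ZMod p) P) • m = m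
        rw [← MonoidAlgebra.one_def, one_smul]
      mul_smul := fun g h m => by
        show (MonoidAlgebra.single (g * h) (1 : ZMod p) : MonoidAlgebra (ZMod p) P) • m =
          (MonoidAlgebra.single g (1 : ZMod p) : MonoidAlgebra (ZMod p) P) •
            ((MonoidAlgebra.single h (1 : ZMod p) : MonoidAlgebra (ZMod p) P) • m)
        rw [← mul_smul, MonoidAlgebra.single_mul_single, one_mul] }
  -- p divides card M
  have hnsmul : ∀ x : M, p • x = 0 := by
    intro x
    have : ((p : MonoidAlgebra (ZMod p) P)) • x = (p : ℕ) • x := Nat.cast_smul_eq_nsmul _ _ _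
    rw [← this]
    have hp0 : ((p : MonoidAlgebra (ZMod p) P)) = 0 := by
      have : ((p : ZMod p)) = 0 := by exact_mod_cast ZMod.natCast_self p
      calc ((p : MonoidAlgebra (ZMod p) P)) = algebraMap (ZMod p) _ ((p : ZMod p)) := by
            rw [map_natCast]
        _ = 0 := by rw [this, map_zero]
    rw [hp0, zero_smul]
  have hdvd : p ∣ Nat.card M := by
    have : Nontrivial M := Finite.one_lt_card_iff_nontrivial.1 hM
    obtain ⟨x, hx⟩ := exists_ne (0 : M)
    have h1 : addOrderOf x ∣ p := addOrderOf_dvd_of_nsmul_eq_zero (hnsmul x)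
    have h2 : addOrderOf x = p := by
      rcases (Nat.Prime.eq_one_or_self_of_dvd Fact.out _ h1) with h | h
      · exact absurd (AddMonoid.addOrderOf_eq_one_iff.1 h) hx
      · exact h
    rw [← h2]
    exact addOrderOf_dvd_natCard x
  -- fixed point
  have h0 : (0 : M) ∈ MulAction.fixedPoints P M := by
    intro g
    show (MonoidAlgebra.single g (1 : ZMod p) : MonoidAlgebra (ZMod p) P) • (0 : M) = 0
    exact smul_zero _
  obtain ⟨b, hbfix, hb0⟩ := hP.exists_fixed_point_of_prime_dvd_card_of_fixed_point M hdvd h0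
  have hbfix' : ∀ g : P,
      (MonoidAlgebra.single g (1 : ZMod p) : MonoidAlgebra (ZMod p) P) • b = b := fun g => hbfix g
  -- the linear map from the trivial module
  let fT : TrivM p →ₗ[MonoidAlgebra (ZMod p) P] M :=
    { toFun := fun c => (MonoidAlgebra.single (1 : P) (tv c) : MonoidAlgebra (ZMod p) P) • b
      map_add' := fun c d => by
        show (MonoidAlgebra.single (1 : P) (tv c + tv d) : MonoidAlgebra (ZMod p) P) • b = _
        rw [MonoidAlgebra.single_add, add_smul]
      map_smul' := fun r c => by
        show (MonoidAlgebra.single (1 : P) (eps p P r * tv c) :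
            MonoidAlgebra (ZMod p) P) • b = r •
          ((MonoidAlgebra.single (1 : P) (tv c) : MonoidAlgebra (ZMod p) P) • b)
        rw [← mul_smul, smul_of_fixed p P hbfix' (r * MonoidAlgebra.single 1 (tv c)),
          map_mul, eps_single] }
  have hinj : Function.Injective fT := by
    rw [injective_iff_map_eq_zero]
    intro c hc
    by_contra hcne
    have hc' : (MonoidAlgebra.single (1 : P) ((tv c)⁻¹) : MonoidAlgebra (ZMod p) P) •
        ((MonoidAlgebra.single (1 : P) (tv c) : MonoidAlgebra (ZMod p) P) • b) = 0 := by
      show _ • fT c = (0 : M)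
      rw [hc, smul_zero]
    rw [← mul_smul, MonoidAlgebra.single_mul_single, one_mul, inv_mul_cancel₀, ←
      MonoidAlgebra.one_def, one_smul] at hc'
    · exact hb0 hc'.symm
    · exact fun h => hcne h
  exact ⟨LinearMap.range fT, LinearEquiv.ofInjective fT hinj, trivial⟩
include hP in
theorem key (n : ℕ) : ∀ (M : Type) [AddCommGroup M] [Module (MonoidAlgebra (ZMod p) P) M]
    [Finite M], Nat.card M = n →
    ∃ d : ℕ, Nat.card M = p ^ d ∧
      G0.cls (ModuleCat.of (MonoidAlgebra (ZMod p) P) M) =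
        d • G0.cls (ModuleCat.of (MonoidAlgebra (ZMod p) P) (TrivM p)) := by
  induction n using Nat.strong_induction_on with
  | _ n ih =>
    intro M _ _ _ hn
    rcases le_or_gt (Nat.card M) 1 with h1 | h1
    · haveI : Subsingleton M := Finite.card_le_one_iff_subsingleton.1 h1
      haveI : Nonempty M := ⟨0⟩
      have hcard : Nat.card M = 1 := le_antisymm h1 Nat.card_pos
      have e : M ≃ₗ[MonoidAlgebra (ZMod p) P] PUnit :=
        { toFun := fun _ => 0
          map_add' := fun _ _ => Subsingleton.elim _ _
          map_smul' := fun _ _ => Subsingleton.elim _ _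
          invFun := fun _ => 0
          left_inv := fun _ => Subsingleton.elim _ _
          right_inv := fun _ => Subsingleton.elim _ _ }
      refine ⟨0, by simp [hcard], ?_⟩
      rw [cls_congr e, cls_punit, zero_smul]
    · obtain ⟨N, e, -⟩ := key_step hP M h1
      have hrel := g0rel (R := MonoidAlgebra (ZMod p) P) N M (M ⧸ N) N.subtype N.mkQ
        N.injective_subtype N.mkQ_surjective
        (by rw [Submodule.range_subtype, Submodule.ker_mkQ])
      haveI : Finite (M ⧸ N) := Quotient.finite _
      have hcards : Nat.card M = Nat.card N * Nat.card (M ⧸ N) :=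
        Submodule.card_eq_card_quotient_mul_card N
      have hNcard : Nat.card N = p := by
        rw [← Nat.card_congr e.toEquiv, card_trivM]
      haveI : Nonempty (M ⧸ N) := ⟨0⟩
      have hQpos : 0 < Nat.card (M ⧸ N) := Nat.card_pos
      have hlt : Nat.card (M ⧸ N) < n := by
        rw [← hn, hcards, hNcard]
        exact (lt_mul_iff_one_lt_left hQpos).2 (Fact.out (p := p.Prime)).one_lt
      obtain ⟨d, hd1, hd2⟩ := ih (Nat.card (M ⧸ N)) hlt (M ⧸ N) rfl
      refine ⟨d + 1, ?_, ?_⟩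
      · rw [hcards, hd1, hNcard, pow_succ, mul_comm]
      · have hNcls : G0.cls (ModuleCat.of (MonoidAlgebra (ZMod p) P) N) =
            G0.cls (ModuleCat.of (MonoidAlgebra (ZMod p) P) (TrivM p)) := (cls_congr e).symm
        rw [hNcls, hd2, sub_add_eq_add_sub, sub_eq_zero] at hrel
        rw [← hrel, succ_nsmul, add_comm]

include hP in
theorem permClass_eq (x : FreeAbelianGroup (BSet P)) :
    permClass p P x = aug P x •
      G0.cls (ModuleCat.of (MonoidAlgebra (ZMod p) P) (TrivM p)) := by
  induction x using FreeAbelianGroup.induction_on with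
  | zero => rw [map_zero, map_zero, zero_smul]
  | of A =>
      rw [permClass, aug, FreeAbelianGroup.lift_apply_of, FreeAbelianGroup.lift_apply_of]
      haveI hFin : Finite ((Representation.ofMulAction (ZMod p) P A.carrier).asModule) :=
        Finite.of_equiv _ ((Representation.ofMulAction (ZMod p) P A.carrier).asModuleEquiv.toEquiv.trans (MonoidAlgebra.coeffEquiv.trans (@Finsupp.equivFunOnFinite A.carrier (ZMod p) _ _))).symm
      have eqv : ((Representation.ofMulAction (ZMod p) P A.carrier).asModule) ≃
          (A.carrier → ZMod p) := (Representation.ofMulAction (ZMod p) P A.carrier).asModuleEquiv.toEquiv.trans (MonoidAlgebra.coeffEquiv.trans (@Finsupp.equivFunOnFinite A.carrier (ZMod p) _ _))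
      have hcV : Nat.card ((Representation.ofMulAction (ZMod p) P A.carrier).asModule) =
          p ^ Nat.card A.carrier := by
        rw [Nat.card_congr eqv, Nat.card_fun, Nat.card_zmod]
      obtain ⟨d, hd1, hd2⟩ := key hP (Nat.card
        ((Representation.ofMulAction (ZMod p) P A.carrier).asModule)) _ rfl
      have hdc : d = Nat.card A.carrier := by
        refine Nat.pow_right_injective (Fact.out (p := p.Prime)).two_le ?_
        show p ^ d = p ^ Nat.card A.carrier
        rw [← hd1, hcV]
      rw [hd2, hdc, natCast_zsmul]
  | neg y ih => rw [map_neg, map_neg, ih, neg_smul]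
  | add y z ihy ihz => rw [map_add, map_add, ihy, ihz, add_smul]

include hP in
theorem stmt13' (x : FreeAbelianGroup (BSet P)) :
    permClass p P x = 0 ↔ aug P x = 0 := by
  haveI hfinR : Finite (MonoidAlgebra (ZMod p) P) :=
    Finite.of_equiv _ ((@Finsupp.equivFunOnFinite P (ZMod p) _ _).symm.trans MonoidAlgebra.coeffEquiv.symm)
  have hfin : ∀ (M : ModuleCat.{0} (MonoidAlgebra (ZMod p) P)),
      Module.Finite (MonoidAlgebra (ZMod p) P) M → Finite M := fun M hM => by
    haveI := hM
    exact Module.finite_of_finite (MonoidAlgebra (ZMod p) P)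
  constructor
  · intro h
    have heq := permClass_eq hP x
    rw [h] at heq
    have h2 := congrArg (dimMap (MonoidAlgebra (ZMod p) P) hfin) heq
    rw [map_zero, map_zsmul, dimMap_cls, ← ofMul_zpow] at h2
    have h3 : (uOf (ModuleCat.of (MonoidAlgebra (ZMod p) P) (TrivM p))) ^ aug P x = 1 :=
      ofMul_eq_zero.1 h2.symm
    have h4 : ((uOf (ModuleCat.of (MonoidAlgebra (ZMod p) P) (TrivM p)) : ℚ)) ^ aug P x = 1 := by
      rw [← Units.val_zpow_eq_zpow_val, h3, Units.val_one]
    have hval : (uOf (ModuleCat.of (MonoidAlgebra (ZMod p) P) (TrivM p)) : ℚ) = (p : ℚ) := by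
      rw [uOf_eq _ (inferInstanceAs (Finite (TrivM p)))]
      exact_mod_cast congrArg (Nat.cast : ℕ → ℚ) (card_trivM p)
    have hp1 : (1 : ℚ) < p := by exact_mod_cast (Fact.out (p := p.Prime)).one_lt
    have hinj := zpow_right_injective₀ (a := (p : ℚ)) (by linarith) (ne_of_gt hp1)
    have h5 : (fun n : ℤ => (p : ℚ) ^ n) (aug P x) = (fun n : ℤ => (p : ℚ) ^ n) 0 := by
      show (p : ℚ) ^ aug P x = (p : ℚ) ^ (0 : ℤ)
      rw [zpow_zero, ← hval]
      exact h4
    exact hinj h5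
  · intro h
    rw [permClass_eq hP x, h, zero_smul]

end key

/-- for a prime `p` and a finite `p`-group `P`, the kernel of the map
`b(P) → G₀(𝔽_p[P])`, `[X] ↦ [𝔽_p[X]]`, is exactly the kernel of the augmentation map
`b(P) → ℤ`, `[X] ↦ |X|`: a virtual `P`-set maps to `0` if and only if its virtual
cardinality is `0`. -/
theorem stmt13 (p : ℕ) [Fact p.Prime] (P : Type) [Group P] [Finite P]
    (hP : IsPGroup p P) (x : FreeAbelianGroup (BSet P)) :
    permClass p P x = 0 ↔ aug P x = 0 := by
  exact stmt13' hP x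
end
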